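/- Let V be a real vector space and let J be a metallic structure on V with parameters p, q ∈ ℝ such that p² + 4q ≠ 0. Define J̃ := (-1/√|p² + 4q|)•(2•J - p•id_V). Then J̃ ∘ J̃ = ((p² + 4q)/|p² + 4q|)•id_V; in particular J̃ ∘ J̃ = id_V when p² + 4q > 0 and J̃ ∘ J̃ = -id_V when p² + 4q < 0. -/

import Mathlib

/-- Let `V` be a real vector space and let `J` be a metallic structure on `V`
with parameters `p, q ∈ ℝ` (i.e. `J ∘ J = p • J + q • id`) such that `p² + 4q ≠ 0`.
Define `J̃ := (-1/√|p² + 4q|) • (2 • J - p • id)`.  Then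
`J̃ ∘ J̃ = ((p² + 4q)/|p² + 4q|) • id`; in particular `J̃ ∘ J̃ = id` when `p² + 4q > 0`
and `J̃ ∘ J̃ = -id` when `p² + 4q < 0`. -/
theorem metallic_tilde_J_squared
    (V : Type*) [AddCommGroup V] [Module ℝ V]
    (p q : ℝ) (J : V →ₗ[ℝ] V)
    (hJ : J ∘ₗ J = p • J + q • (LinearMap.id : V →ₗ[ℝ] V))
    (h : p ^ 2 + 4 * q ≠ 0)
    (Jt : V →ₗ[ℝ] V)
    (hJt : Jt = (-1 / Real.sqrt |p ^ 2 + 4 * q|) •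
        ((2 : ℝ) • J - p • (LinearMap.id : V →ₗ[ℝ] V))) :
    Jt ∘ₗ Jt = ((p ^ 2 + 4 * q) / |p ^ 2 + 4 * q|) • (LinearMap.id : V →ₗ[ℝ] V) ∧
      (0 < p ^ 2 + 4 * q → Jt ∘ₗ Jt = LinearMap.id) ∧
      (p ^ 2 + 4 * q < 0 → Jt ∘ₗ Jt = -LinearMap.id) := by
  have habs : |p ^ 2 + 4 * q| ≠ 0 := abs_ne_zero.mpr h
  have hs : Real.sqrt |p ^ 2 + 4 * q| * Real.sqrt |p ^ 2 + 4 * q| = |p ^ 2 + 4 * q| :=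
    Real.mul_self_sqrt (abs_nonneg _)
  have hsne : Real.sqrt |p ^ 2 + 4 * q| ≠ 0 := by
    intro h0
    rw [h0, mul_zero] at hs
    exact habs hs.symm
  have main : Jt ∘ₗ Jt = ((p ^ 2 + 4 * q) / |p ^ 2 + 4 * q|) • (LinearMap.id : V →ₗ[ℝ] V) := by
    ext v
    have hJv : J (J v) = p • J v + q • v := by
      have := congrArg (fun f => f v) hJ
      simpa using this
    simp only [hJt, LinearMap.comp_apply, LinearMap.smul_apply, LinearMap.sub_apply,
      LinearMap.id_apply, LinearMap.id_coe, id_eq, map_smul, map_sub, hJv, smul_sub, smul_add,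
      smul_smul]
    rw [div_eq_mul_inv, ← hs]
    field_simp
    ring_nf
    rw [Real.sqrt_sq (Real.sqrt_nonneg _)]
    module
  refine ⟨main, ?_, ?_⟩
  · intro hpos
    rw [main, abs_of_pos hpos, div_self h, one_smul]
  · intro hneg
    rw [main, abs_of_neg hneg, div_neg, div_self h, neg_smul, one_smul]
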